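/- Suppose N, M and G are finite rooted trees, (ν(n))_{n ∈ V(N)} is a nice N-deconstruction of M, and (μ(m))_{m ∈ V(M)} is a nice M-deconstruction of G. Then (⋃_{m ∈ ν(n)} μ(m))_{n ∈ V(N)} is a nice N-deconstruction of G. -/

import Mathlib

open SimpleGraph

/-- The reflexive closure of the adjacency relation of a graph. -/
def reflAdj {α : Type} (G : SimpleGraph α) (a b : α) : Prop := a = b ∨ G.Adj a b

/-- A set of vertices induces a connected subgraph of `G`. -/
def ConnSet {α : Type} (G : SimpleGraph α) (s : Set α) : Prop := (G.induce s).Connected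

/-- `B` is an `H`-deconstruction of `G`: coverage and connectivity. -/
def IsDeconstruction {α β : Type} (G : SimpleGraph α) (H : SimpleGraph β)
    (B : β → Set α) : Prop :=
  (∀ g g' : α, reflAdj G g g' →
      ∃ h h' : β, reflAdj H h h' ∧ g ∈ B h ∪ B h' ∧ g' ∈ B h ∪ B h') ∧
  (∀ g : α, ConnSet H {h | g ∈ B h})

/-- The family `B` (viewed as an `H`-indexed family of bags) has width at most `w`. -/
def DeconWidthLE {α β : Type} (H : SimpleGraph β) (B : β → Set α) (w : ℕ) : Prop :=
  ∀ h h' : β, reflAdj H h h' → (B h ∪ B h').ncard ≤ w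

/-- `B` is an `H`-decomposition of `G`: each (refl-)edge inside a single bag, plus
connectivity. -/
def IsDecomposition {α β : Type} (G : SimpleGraph α) (H : SimpleGraph β)
    (B : β → Set α) : Prop :=
  (∀ g g' : α, reflAdj G g g' → ∃ h : β, g ∈ B h ∧ g' ∈ B h) ∧
  (∀ g : α, ConnSet H {h | g ∈ B h})

/-- A finite simple graph, presented on a vertex set `Fin n`. -/
structure FinGraph where
  n : ℕ
  G : SimpleGraph (Fin n)

/-- `𝒢 ≼ ℋ` : every graph in `𝒢` has an `H`-deconstruction of width `≤ w`
for some `H ∈ ℋ`, for a uniform constant `w`. -/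
def DeconLE (𝒢 ℋ : Set FinGraph) : Prop :=
  ∃ w : ℕ, ∀ G ∈ 𝒢, ∃ H ∈ ℋ, ∃ B : Fin H.n → Set (Fin G.n),
    IsDeconstruction G.G H.G B ∧ DeconWidthLE H.G B w

/-- `𝒢 ≡ ℋ`. -/
def DeconEquiv (𝒢 ℋ : Set FinGraph) : Prop := DeconLE 𝒢 ℋ ∧ DeconLE ℋ 𝒢

/-- `𝒢 ≺ ℋ`. -/
def DeconLT (𝒢 ℋ : Set FinGraph) : Prop := DeconLE 𝒢 ℋ ∧ ¬ DeconEquiv 𝒢 ℋ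

/-- `μ` is a minor map from `M` to `G`. -/
def IsMinorMap {α β : Type} (M : SimpleGraph α) (G : SimpleGraph β)
    (μ : α → Set β) : Prop :=
  (∀ m : α, ConnSet G (μ m)) ∧
  (∀ m m' : α, m ≠ m' → Disjoint (μ m) (μ m')) ∧
  (∀ m m' : α, M.Adj m m' → ∃ g ∈ μ m, ∃ g' ∈ μ m', G.Adj g g')

/-- `M` is a minor of `G`. -/
def IsMinor (M G : FinGraph) : Prop :=
  ∃ μ : Fin M.n → Set (Fin G.n), IsMinorMap M.G G.G μ

/-- The class of all minors of graphs in `𝒢`. -/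
def minorsCl (𝒢 : Set FinGraph) : Set FinGraph := {M | ∃ G ∈ 𝒢, IsMinor M G}

/-- The (connected) graph `G`, viewed as a tree, has height at most `d`:
some rooting puts every vertex within distance `d` of the root. -/
def treeHeightLE (G : FinGraph) (d : ℕ) : Prop :=
  ∃ r : Fin G.n, ∀ v : Fin G.n, G.G.dist r v ≤ d

/-- Every connected component of `G` has height at most `d`. -/
def forestHeightLE (G : FinGraph) (d : ℕ) : Prop :=
  ∀ v : Fin G.n, ∃ r : Fin G.n, G.G.Reachable r v ∧
    ∀ u : Fin G.n, G.G.Reachable r u → G.G.dist r u ≤ d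

/-- `ℒ` : the class of all finite simple graphs. -/
def classL : Set FinGraph := Set.univ

/-- `𝒯` : the class of all finite trees. -/
def classT : Set FinGraph := {G | G.G.IsTree}

/-- `𝒫` : the class of all finite paths (on at least two vertices). -/
def classP : Set FinGraph := {G | ∃ m : ℕ, 2 ≤ m ∧ Nonempty (G.G ≃g pathGraph m)}

/-- `𝒯_d` : all finite trees of height at most `d`. -/
def classTd (d : ℕ) : Set FinGraph := {G | G.G.IsTree ∧ treeHeightLE G d}

/-- `ℱ_d` : all finite forests of height at most `d`. -/
def classFd (d : ℕ) : Set FinGraph := {G | G.G.IsAcyclic ∧ forestHeightLE G d}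

/-- The complete `k`-ary tree `T_{h,k}` of height `h`, on strings over `[k]` of
length at most `h`; each string of length `< h` is joined to its one-symbol extensions. -/
def kAryTree (h k : ℕ) : SimpleGraph {l : List (Fin k) // l.length ≤ h} :=
  SimpleGraph.fromRel (fun a b => ∃ i : Fin k, b.1 = i :: a.1)

/-- For every `k ≥ 1`, the tree `T_{h,k}` is a minor of some graph in `𝒢`. -/
def StackAll (𝒢 : Set FinGraph) (h : ℕ) : Prop :=
  ∀ k : ℕ, 1 ≤ k → ∃ G ∈ 𝒢, ∃ μ : {l : List (Fin k) // l.length ≤ h} → Set (Fin G.n),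
    IsMinorMap (kAryTree h k) G.G μ

/-- `𝒢` has stack depth (exactly) `d`. -/
def HasStackDepth (𝒢 : Set FinGraph) (d : ℕ) : Prop :=
  StackAll 𝒢 d ∧ ¬ StackAll 𝒢 (d + 1)

/-- The tree depth of `G` is at most `h`: there is a rooted forest on the vertex
set of `G` (given by a parent function whose fixed points are the roots) of height
at most `h` whose (ancestor-descendant) closure contains all edges of `G`. -/
def TreeDepthLE {α : Type} (G : SimpleGraph α) (h : ℕ) : Prop :=
  ∃ par : α → α,
    (∀ v : α, par (par^[h] v) = par^[h] v) ∧
    (∀ u v : α, G.Adj u v → (∃ k : ℕ, par^[k] u = v) ∨ (∃ k : ℕ, par^[k] v = u))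

/-- The class `𝒢` has bounded tree depth. -/
def HasBoundedTreeDepth (𝒢 : Set FinGraph) : Prop :=
  ∃ h : ℕ, ∀ G ∈ 𝒢, TreeDepthLE G.G h

/-- The class `𝒢` has bounded treewidth (via tree decompositions). -/
def HasBoundedTreewidth (𝒢 : Set FinGraph) : Prop :=
  ∃ w : ℕ, ∀ G ∈ 𝒢, ∃ H : FinGraph, H.G.IsTree ∧
    ∃ B : Fin H.n → Set (Fin G.n), IsDecomposition G.G H.G B ∧ ∀ h, (B h).ncard ≤ w + 1

/-- The class `𝒢` has bounded pathwidth (via path decompositions). -/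
def HasBoundedPathwidth (𝒢 : Set FinGraph) : Prop :=
  ∃ w : ℕ, ∀ G ∈ 𝒢, ∃ H : FinGraph, H ∈ classP ∧
    ∃ B : Fin H.n → Set (Fin G.n), IsDecomposition G.G H.G B ∧ ∀ h, (B h).ncard ≤ w + 1

/-- A finite rooted tree. -/
structure RootedFinTree where
  n : ℕ
  G : SimpleGraph (Fin n)
  isTree : G.IsTree
  root : Fin n

/-- `c` is a child of `p` in the rooted tree `T`. -/
def RootedFinTree.IsChild (T : RootedFinTree) (p c : Fin T.n) : Prop :=
  T.G.Adj p c ∧ T.G.dist T.root c = T.G.dist T.root p + 1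

/-- `a` is an ancestor of `v` in the rooted tree `T` (i.e. `a` lies on the unique
path from the root to `v`). -/
def RootedFinTree.Ancestor (T : RootedFinTree) (a v : Fin T.n) : Prop :=
  T.G.dist T.root v = T.G.dist T.root a + T.G.dist a v

/-- `(μ m)_{m}` is a nice `M`-deconstruction of `G`, for rooted trees `M`, `G`. -/
def IsNiceDecon (M G : RootedFinTree) (μ : Fin M.n → Set (Fin G.n)) : Prop :=
  IsDeconstruction G.G M.G μ ∧
  IsMinorMap M.G G.G μ ∧
  G.root ∈ μ M.root ∧
  (∀ (m m' : Fin M.n) (g g' : Fin G.n),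
    M.IsChild m m' → g ∈ μ m → g' ∈ μ m' → G.G.Adj g g' → G.IsChild g g')

/-- The node `u` of the rooted tree `T` has property `P(d,k)`. -/
def PropP (T : RootedFinTree) (k : ℕ) : ℕ → Fin T.n → Prop
  | 0, _ => True
  | d + 1, u => ∃ s : Finset (Fin T.n), s.card = k ∧
      (∀ v ∈ s, T.Ancestor u v) ∧
      (∀ v ∈ s, ∀ w ∈ s, v ≠ w → ¬ T.Ancestor v w ∧ ¬ T.Ancestor w v) ∧
      (∀ v ∈ s, PropP T k d v)


lemma reach_mono {α : Type} (G : SimpleGraph α) {s t : Set α} (h : s ⊆ t)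
    {a b : α} (ha : a ∈ s) (hb : b ∈ s)
    (hr : (G.induce s).Reachable ⟨a, ha⟩ ⟨b, hb⟩) :
    (G.induce t).Reachable ⟨a, h ha⟩ ⟨b, h hb⟩ := by
  have := hr.map (G.induceHomOfLE h).toHom
  exact this

lemma connSet_biUnion {α β : Type} (M : SimpleGraph α) (G : SimpleGraph β)
    (μ : α → Set β)
    (hconn : ∀ m, ConnSet G (μ m))
    (hedge : ∀ m m', M.Adj m m' → ∃ g ∈ μ m, ∃ g' ∈ μ m', G.Adj g g')
    {s : Set α} (hs : ConnSet M s) :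
    ConnSet G (⋃ m ∈ s, μ m) := by
  set U := ⋃ m ∈ s, μ m with hU
  have hsub : ∀ m ∈ s, μ m ⊆ U := fun m hm => Set.subset_biUnion_of_mem hm
  have within : ∀ m ∈ s, ∀ v ∈ μ m, ∀ v' ∈ μ m, ∀ (hv : v ∈ U) (hv' : v' ∈ U),
      (G.induce U).Reachable ⟨v, hv⟩ ⟨v', hv'⟩ := by
    intro m hm v hv v' hv' hvU hv'U
    exact reach_mono G (hsub m hm) hv hv' ((hconn m).preconnected ⟨v, hv⟩ ⟨v', hv'⟩)
  have key : ∀ (x y : s), (M.induce s).Walk x y → ∀ v ∈ μ x.1, ∀ v' ∈ μ y.1,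
      ∀ (hv : v ∈ U) (hv' : v' ∈ U), (G.induce U).Reachable ⟨v, hv⟩ ⟨v', hv'⟩ := by
    intro x y w
    induction w with
    | nil =>
      intro v hv v' hv' hvU hv'U
      exact within _ (by exact Subtype.coe_prop _) v hv v' hv' hvU hv'U
    | @cons a b c h p ih =>
      intro v hv v' hv' hvU hv'U
      have hadj : M.Adj a.1 b.1 := h
      obtain ⟨g, hg, g', hg', hgg'⟩ := hedge _ _ hadj
      have hgU : g ∈ U := hsub _ a.2 hg
      have hg'U : g' ∈ U := hsub _ b.2 hg'
      have r1 : (G.induce U).Reachable ⟨v, hvU⟩ ⟨g, hgU⟩ :=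
        within _ a.2 v hv g hg hvU hgU
      have r2 : (G.induce U).Reachable ⟨g, hgU⟩ ⟨g', hg'U⟩ :=
        Adj.reachable (by exact hgg')
      exact (r1.trans r2).trans (ih g' hg' v' hv' hg'U hv'U)
  obtain ⟨⟨m₀, hm₀⟩⟩ := hs.nonempty
  obtain ⟨⟨u₀, hu₀⟩⟩ := (hconn m₀).nonempty
  rw [ConnSet, connected_iff]
  refine ⟨?_, ⟨⟨u₀, hsub _ hm₀ hu₀⟩⟩⟩
  rintro ⟨v, hv⟩ ⟨v', hv'⟩
  obtain ⟨m, hm, hvm⟩ := Set.mem_iUnion₂.mp hv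
  obtain ⟨m', hm', hvm'⟩ := Set.mem_iUnion₂.mp hv'
  obtain ⟨w⟩ := hs.preconnected ⟨m, hm⟩ ⟨m', hm'⟩
  exact key _ _ w v hvm v' hvm' hv hv'

/-- nice deconstructions of rooted trees compose: if `ν` is a nice
`N`-deconstruction of `M` and `μ` is a nice `M`-deconstruction of `G`, then
`(⋃_{m ∈ ν n} μ m)_n` is a nice `N`-deconstruction of `G`. -/
theorem transitivity_niceness (N M G : RootedFinTree)
    (ν : Fin N.n → Set (Fin M.n)) (μ : Fin M.n → Set (Fin G.n))
    (hν : IsNiceDecon N M ν) (hμ : IsNiceDecon M G μ) :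
    IsNiceDecon N G (fun x => ⋃ m ∈ ν x, μ m) := by
  obtain ⟨⟨μcov, μconn⟩, ⟨μbag, μdisj, μedge⟩, μroot, μchild⟩ := hμ
  obtain ⟨⟨νcov, νconn⟩, ⟨νbag, νdisj, νedge⟩, νroot, νchild⟩ := hν
  have μuniq : ∀ {g : Fin G.n} {a b : Fin M.n}, g ∈ μ a → g ∈ μ b → a = b := by
    intro g a b ha hb
    by_contra hne
    exact Set.disjoint_left.mp (μdisj a b hne) ha hb
  have νuniq : ∀ {m : Fin M.n} {a b : Fin N.n}, m ∈ ν a → m ∈ ν b → a = b := by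
    intro m a b ha hb
    by_contra hne
    exact Set.disjoint_left.mp (νdisj a b hne) ha hb
  have memB : ∀ {g : Fin G.n} {x : Fin N.n},
      g ∈ (⋃ m ∈ ν x, μ m) ↔ ∃ m ∈ ν x, g ∈ μ m := by
    intro g x; simp
  refine ⟨⟨?_, ?_⟩, ⟨?_, ?_, ?_⟩, ?_, ?_⟩
  · -- coverage
    intro g g' hgg'
    obtain ⟨m, m', hmm', hg, hg'⟩ := μcov g g' hgg'
    obtain ⟨n, n', hnn', hm, hm'⟩ := νcov m m' hmm'
    refine ⟨n, n', hnn', ?_, ?_⟩ <;>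
    · simp only [Set.mem_union]
      first
      | (rcases hg with h | h
         · rcases hm with h' | h'
           · exact Or.inl (memB.mpr ⟨m, h', h⟩)
           · exact Or.inr (memB.mpr ⟨m, h', h⟩)
         · rcases hm' with h' | h'
           · exact Or.inl (memB.mpr ⟨m', h', h⟩)
           · exact Or.inr (memB.mpr ⟨m', h', h⟩))
      | (rcases hg' with h | h
         · rcases hm with h' | h'
           · exact Or.inl (memB.mpr ⟨m, h', h⟩)
           · exact Or.inr (memB.mpr ⟨m, h', h⟩)
         · rcases hm' with h' | h'
           · exact Or.inl (memB.mpr ⟨m', h', h⟩)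
           · exact Or.inr (memB.mpr ⟨m', h', h⟩))
  · -- deconstruction connectivity
    intro g
    obtain ⟨⟨mg, hmg⟩⟩ := (μconn g).nonempty
    have hmg' : g ∈ μ mg := hmg
    have hset : {h : Fin N.n | g ∈ ⋃ m ∈ ν h, μ m} = {n : Fin N.n | mg ∈ ν n} := by
      ext n
      simp only [Set.mem_setOf_eq]
      constructor
      · intro h
        obtain ⟨m, hm, hgm⟩ := memB.mp h
        rwa [μuniq hgm hmg'] at hm
      · intro h
        exact memB.mpr ⟨mg, h, hmg'⟩
    have := νconn mg
    simp only [ConnSet] at this ⊢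
    convert this using 2
  · -- branch set connectivity
    intro n
    exact connSet_biUnion M.G G.G μ μbag μedge (νbag n)
  · -- disjointness
    intro n n' hne
    rw [Set.disjoint_left]
    intro g hgn hgn'
    obtain ⟨m, hm, hgm⟩ := memB.mp hgn
    obtain ⟨m', hm', hgm'⟩ := memB.mp hgn'
    exact hne (νuniq (μuniq hgm hgm' ▸ hm) hm')
  · -- edge witnessing
    intro n n' hadj
    obtain ⟨m, hm, m', hm', hmm'⟩ := νedge n n' hadj
    obtain ⟨g, hg, g', hg', hgg'⟩ := μedge m m' hmm'
    exact ⟨g, memB.mpr ⟨m, hm, hg⟩, g', memB.mpr ⟨m', hm', hg'⟩, hgg'⟩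
  · -- root
    exact memB.mpr ⟨M.root, νroot, μroot⟩
  · -- child condition
    intro n n' g g' hc hg hg' hadj
    obtain ⟨m, hm, hgm⟩ := memB.mp hg
    obtain ⟨m', hm', hgm'⟩ := memB.mp hg'
    have hne : n ≠ n' := hc.1.ne
    have hmm : m ≠ m' := fun h => hne (νuniq (h ▸ hm) hm')
    obtain ⟨a, b, hab, hga, hg'a⟩ := μcov g g' (Or.inr hadj)
    have h1 : m = a ∨ m = b := by
      rcases hga with h | h
      · exact Or.inl (μuniq hgm h)
      · exact Or.inr (μuniq hgm h)
    have h2 : m' = a ∨ m' = b := by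
      rcases hg'a with h | h
      · exact Or.inl (μuniq hgm' h)
      · exact Or.inr (μuniq hgm' h)
    have hMadj : M.G.Adj m m' := by
      rcases hab with rfl | hab
      · exact absurd ((h1.elim id id).trans (h2.elim id id).symm) hmm
      · rcases h1 with rfl | rfl <;> rcases h2 with rfl | rfl
        · exact absurd rfl hmm
        · exact hab
        · exact hab.symm
        · exact absurd rfl hmm
    exact μchild m m' g g' (νchild n n' m m' hc hm hm' hMadj) hgm hgm' hadj
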